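/- arXiv:1408.3749 — 2 statements merged into one kernel-verified Lean document; each statement's English description precedes it below -/
import Mathlib

section
/- (Energy transformation of the acoustic system into right/left going modes) Let $\rho > 0$ be constant and $K(t,z) > 0$ be $C^1$. Suppose $(u, p)$ solves $\rho\, \partial_t u + \partial_z p = 0$ and $K^{-1} \partial_t p + \partial_z u = 0$ on an open set. Define $c = \sqrt{K/\rho}$, $\zeta = \rho c$, $A = \zeta^{-1/2} p + \zeta^{1/2} u$, and $B = -\zeta^{-1/2} p + \zeta^{1/2} u$. Then $A$ satisfies $\frac{1}{c} \partial_t A + \partial_z A = \left(\frac{\partial_z \zeta}{2\zeta} + \frac{\partial_t \zeta}{2 c \zeta}\right) B$ and $B$ satisfies $\frac{1}{c} \partial_t B - \partial_z B = \left(-\frac{\partial_z \zeta}{2\zeta} + \frac{\partial_t \zeta}{2 c \zeta}\right) A$. -/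
set_option maxHeartbeats 1000000


open Real

private lemma sliceT {F : ℝ → ℝ → ℝ} (hF : ContDiff ℝ 1 (Function.uncurry F)) (z t : ℝ) :
    DifferentiableAt ℝ (fun t' => F t' z) t :=
  by have g : DifferentiableAt ℝ (fun x : ℝ => (x, z)) t := differentiableAt_id.prodMk (differentiableAt_const z); exact ((hF.differentiable one_ne_zero) (t, z)).comp t g

private lemma sliceZ {F : ℝ → ℝ → ℝ} (hF : ContDiff ℝ 1 (Function.uncurry F)) (t z : ℝ) :
    DifferentiableAt ℝ (fun z' => F t z') z :=
  ((hF.differentiable one_ne_zero) (t, z)).comp z ((differentiableAt_const t).prodMk differentiableAt_id)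

/-- Transformation of the acoustic system into right/left going modes. -/
theorem stmt14 (ρ : ℝ) (hρ : 0 < ρ) (K u p c ζ A B : ℝ → ℝ → ℝ)
    (hKpos : ∀ t z, 0 < K t z)
    (hK : ContDiff ℝ 1 (Function.uncurry K))
    (hu : ContDiff ℝ 1 (Function.uncurry u))
    (hp : ContDiff ℝ 1 (Function.uncurry p))
    (heq1 : ∀ t z, ρ * deriv (fun t' => u t' z) t + deriv (fun z' => p t z') z = 0)
    (heq2 : ∀ t z, (K t z)⁻¹ * deriv (fun t' => p t' z) t + deriv (fun z' => u t z') z = 0)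
    (hc : ∀ t z, c t z = Real.sqrt (K t z / ρ))
    (hζ : ∀ t z, ζ t z = ρ * c t z)
    (hA : ∀ t z, A t z = p t z / Real.sqrt (ζ t z) + Real.sqrt (ζ t z) * u t z)
    (hB : ∀ t z, B t z = -(p t z / Real.sqrt (ζ t z)) + Real.sqrt (ζ t z) * u t z) :
    (∀ t z, (c t z)⁻¹ * deriv (fun t' => A t' z) t + deriv (fun z' => A t z') z =
      (deriv (fun z' => ζ t z') z / (2 * ζ t z) +
        deriv (fun t' => ζ t' z) t / (2 * c t z * ζ t z)) * B t z) ∧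
    (∀ t z, (c t z)⁻¹ * deriv (fun t' => B t' z) t - deriv (fun z' => B t z') z =
      (-(deriv (fun z' => ζ t z') z) / (2 * ζ t z) +
        deriv (fun t' => ζ t' z) t / (2 * c t z * ζ t z)) * A t z) := by
  have hρ' : ρ ≠ 0 := ne_of_gt hρ
  have main : ∀ t z,
      ((c t z)⁻¹ * deriv (fun t' => A t' z) t + deriv (fun z' => A t z') z =
        (deriv (fun z' => ζ t z') z / (2 * ζ t z) +
          deriv (fun t' => ζ t' z) t / (2 * c t z * ζ t z)) * B t z) ∧
      ((c t z)⁻¹ * deriv (fun t' => B t' z) t - deriv (fun z' => B t z') z =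
        (-(deriv (fun z' => ζ t z') z) / (2 * ζ t z) +
          deriv (fun t' => ζ t' z) t / (2 * c t z * ζ t z)) * A t z) := by
    intro t z
    have hKp : 0 < K t z := hKpos t z
    have hKρ : 0 < K t z / ρ := div_pos hKp hρ
    have hc0 : 0 < c t z := by rw [hc]; exact Real.sqrt_pos.mpr hKρ
    have hζ0 : 0 < ζ t z := by rw [hζ]; positivity
    have hS0 : 0 < Real.sqrt (ζ t z) := Real.sqrt_pos.mpr hζ0
    -- derivatives of K slices
    have hKt : HasDerivAt (fun t' => K t' z) (deriv (fun t' => K t' z) t) t :=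
      (sliceT hK z t).hasDerivAt
    have hKz : HasDerivAt (fun z' => K t z') (deriv (fun z' => K t z') z) z :=
      (sliceZ hK t z).hasDerivAt
    have hpt : HasDerivAt (fun t' => p t' z) (deriv (fun t' => p t' z) t) t :=
      (sliceT hp z t).hasDerivAt
    have hpz : HasDerivAt (fun z' => p t z') (deriv (fun z' => p t z') z) z :=
      (sliceZ hp t z).hasDerivAt
    have hut : HasDerivAt (fun t' => u t' z) (deriv (fun t' => u t' z) t) t :=
      (sliceT hu z t).hasDerivAt
    have huz : HasDerivAt (fun z' => u t z') (deriv (fun z' => u t z') z) z :=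
      (sliceZ hu t z).hasDerivAt
    -- ζ slices
    have hfζt : (fun t' => ζ t' z) = fun t' => ρ * Real.sqrt (K t' z / ρ) := by
      funext x; rw [hζ, hc]
    have hfζz : (fun z' => ζ t z') = fun z' => ρ * Real.sqrt (K t z' / ρ) := by
      funext x; rw [hζ, hc]
    have hζt : HasDerivAt (fun t' => ζ t' z)
        (ρ * (deriv (fun t' => K t' z) t / ρ / (2 * Real.sqrt (K t z / ρ)))) t := by
      rw [hfζt]
      exact ((hKt.div_const ρ).sqrt (ne_of_gt hKρ)).const_mul ρ
    have hζz : HasDerivAt (fun z' => ζ t z')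
        (ρ * (deriv (fun z' => K t z') z / ρ / (2 * Real.sqrt (K t z / ρ)))) z := by
      rw [hfζz]
      exact ((hKz.div_const ρ).sqrt (ne_of_gt hKρ)).const_mul ρ
    -- sqrt ζ slices
    have hst : HasDerivAt (fun t' => Real.sqrt (ζ t' z))
        (ρ * (deriv (fun t' => K t' z) t / ρ / (2 * Real.sqrt (K t z / ρ))) /
          (2 * Real.sqrt (ζ t z))) t := hζt.sqrt (ne_of_gt hζ0)
    have hsz : HasDerivAt (fun z' => Real.sqrt (ζ t z'))
        (ρ * (deriv (fun z' => K t z') z / ρ / (2 * Real.sqrt (K t z / ρ))) /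
          (2 * Real.sqrt (ζ t z))) z := hζz.sqrt (ne_of_gt hζ0)
    -- A and B slices
    have hfAt : (fun t' => A t' z)
        = fun t' => p t' z / Real.sqrt (ζ t' z) + Real.sqrt (ζ t' z) * u t' z := by
      funext x; rw [hA]
    have hfAz : (fun z' => A t z')
        = fun z' => p t z' / Real.sqrt (ζ t z') + Real.sqrt (ζ t z') * u t z' := by
      funext x; rw [hA]
    have hfBt : (fun t' => B t' z)
        = fun t' => -(p t' z / Real.sqrt (ζ t' z)) + Real.sqrt (ζ t' z) * u t' z := by
      funext x; rw [hB]
    have hfBz : (fun z' => B t z')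
        = fun z' => -(p t z' / Real.sqrt (ζ t z')) + Real.sqrt (ζ t z') * u t z' := by
      funext x; rw [hB]
    have hAt : HasDerivAt (fun t' => A t' z)
        ((deriv (fun t' => p t' z) t * Real.sqrt (ζ t z) -
            p t z * (ρ * (deriv (fun t' => K t' z) t / ρ / (2 * Real.sqrt (K t z / ρ))) /
              (2 * Real.sqrt (ζ t z)))) / Real.sqrt (ζ t z) ^ 2 +
          (ρ * (deriv (fun t' => K t' z) t / ρ / (2 * Real.sqrt (K t z / ρ))) /
              (2 * Real.sqrt (ζ t z)) * u t z +
            Real.sqrt (ζ t z) * deriv (fun t' => u t' z) t)) t := by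
      rw [hfAt]
      exact (hpt.div hst (ne_of_gt hS0)).add (hst.mul hut)
    have hAz : HasDerivAt (fun z' => A t z')
        ((deriv (fun z' => p t z') z * Real.sqrt (ζ t z) -
            p t z * (ρ * (deriv (fun z' => K t z') z / ρ / (2 * Real.sqrt (K t z / ρ))) /
              (2 * Real.sqrt (ζ t z)))) / Real.sqrt (ζ t z) ^ 2 +
          (ρ * (deriv (fun z' => K t z') z / ρ / (2 * Real.sqrt (K t z / ρ))) /
              (2 * Real.sqrt (ζ t z)) * u t z +
            Real.sqrt (ζ t z) * deriv (fun z' => u t z') z)) z := by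
      rw [hfAz]
      exact (hpz.div hsz (ne_of_gt hS0)).add (hsz.mul huz)
    have hBt : HasDerivAt (fun t' => B t' z)
        (-((deriv (fun t' => p t' z) t * Real.sqrt (ζ t z) -
            p t z * (ρ * (deriv (fun t' => K t' z) t / ρ / (2 * Real.sqrt (K t z / ρ))) /
              (2 * Real.sqrt (ζ t z)))) / Real.sqrt (ζ t z) ^ 2) +
          (ρ * (deriv (fun t' => K t' z) t / ρ / (2 * Real.sqrt (K t z / ρ))) /
              (2 * Real.sqrt (ζ t z)) * u t z +
            Real.sqrt (ζ t z) * deriv (fun t' => u t' z) t)) t := by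
      rw [hfBt]
      exact ((hpt.div hst (ne_of_gt hS0)).neg).add (hst.mul hut)
    have hBz : HasDerivAt (fun z' => B t z')
        (-((deriv (fun z' => p t z') z * Real.sqrt (ζ t z) -
            p t z * (ρ * (deriv (fun z' => K t z') z / ρ / (2 * Real.sqrt (K t z / ρ))) /
              (2 * Real.sqrt (ζ t z)))) / Real.sqrt (ζ t z) ^ 2) +
          (ρ * (deriv (fun z' => K t z') z / ρ / (2 * Real.sqrt (K t z / ρ))) /
              (2 * Real.sqrt (ζ t z)) * u t z +
            Real.sqrt (ζ t z) * deriv (fun z' => u t z') z)) z := by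
      rw [hfBz]
      exact ((hpz.div hsz (ne_of_gt hS0)).neg).add (hsz.mul huz)
    -- substitute the PDE
    have hPt : deriv (fun t' => p t' z) t = -(K t z * deriv (fun z' => u t z') z) := by
      have h := heq2 t z
      field_simp at h
      linarith
    have hUt : deriv (fun t' => u t' z) t = -(deriv (fun z' => p t z') z / ρ) := by
      have h := heq1 t z
      field_simp
      linarith
    -- express c, K, ζ in terms of S = √ζ
    have hcc : c t z * c t z = K t z / ρ := by
      rw [hc]; exact Real.mul_self_sqrt hKρ.le
    have hKv : K t z = ρ * (c t z * c t z) := by rw [hcc]; field_simp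
    have hSS : Real.sqrt (ζ t z) * Real.sqrt (ζ t z) = ζ t z :=
      Real.mul_self_sqrt hζ0.le
    have hcS : c t z = Real.sqrt (ζ t z) * Real.sqrt (ζ t z) / ρ := by
      rw [hSS, hζ]; field_simp
    constructor
    · rw [hAt.deriv, hAz.deriv, hζt.deriv, hζz.deriv, hB t z, hPt, hUt, ← hc t z, hKv]
      generalize hSg : Real.sqrt (ζ t z) = S
      rw [hSg] at hSS hcS hS0
      have hζv : ζ t z = S * S := hSS.symm
      rw [hζv, hcS]
      have hSne : S ≠ 0 := ne_of_gt hS0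
      field_simp
      ring
    · rw [hBt.deriv, hBz.deriv, hζt.deriv, hζz.deriv, hA t z, hPt, hUt, ← hc t z, hKv]
      generalize hSg : Real.sqrt (ζ t z) = S
      rw [hSg] at hSS hcS hS0
      have hζv : ζ t z = S * S := hSS.symm
      rw [hζv, hcS]
      have hSne : S ≠ 0 := ne_of_gt hS0
      field_simp
      ring
  exact ⟨fun t z => (main t z).1, fun t z => (main t z).2⟩
end

section
/- Let $\varPhi: \mathbb{R} \to \mathbb{R}$ be a twice continuously differentiable even autocorrelation with $\varPhi(0) = 1$, $\varPhi'(0)=0$, and $\varPhi, \varPhi', \varPhi''$ integrable with decay at infinity. Let $|v| < c_o$ and define $\gamma(\omega) = \frac{v^2 - c_o^2}{4\omega^2 c_o} \int_0^{\infty} \varPhi''((c_o + v)u)\, e^{2i\omega u}\, du$ for $\omega \ne 0$. Then $\gamma(\omega) = \frac{i(v - c_o)}{2\omega c_o (c_o + v)} + \frac{(c_o - v)}{2 c_o (c_o + v)^2} \hat{\varPhi}\left(\frac{2\omega}{c_o + v}\right) + i\, \frac{(c_o - v)}{c_o (c_o + v)^2} \int_0^{\infty} \varPhi(z) \sin\left(\frac{2\omega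 z}{c_o + v}\right) dz$, where $\hat{\varPhi}(k) = \int_{-\infty}^{\infty} \varPhi(z) e^{ikz} dz$ (real by evenness). -/
open MeasureTheory Filter Set Complex

lemma cexp_norm_one (ω u : ℝ) : ‖Complex.exp (2 * Complex.I * ω * u)‖ = 1 := by
  have h : (2 * Complex.I * ω * u) = ((2*ω*u : ℝ):ℂ) * Complex.I := by push_cast; ring
  rw [h, Complex.norm_exp_ofReal_mul_I]

lemma cexp_norm_one' (k z : ℝ) : ‖Complex.exp (Complex.I * k * z)‖ = 1 := by
  have h : (Complex.I * k * z) = ((k*z : ℝ):ℂ) * Complex.I := by push_cast; ring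
  rw [h, Complex.norm_exp_ofReal_mul_I]

lemma helper_int {g : ℝ → ℝ} (hg : Integrable g) {a : ℝ} (ha : a ≠ 0) (ω : ℝ) :
    Integrable (fun u : ℝ => ((g (a*u) : ℝ) : ℂ) * Complex.exp (2*Complex.I*ω*u)) := by
  have h1 : Integrable fun u : ℝ => ((g (a*u):ℝ):ℂ) := (hg.comp_mul_left' ha).ofReal
  have h2 : AEStronglyMeasurable (fun u : ℝ => Complex.exp (2*Complex.I*ω*u)) volume := by
    exact (Complex.continuous_exp.comp (by continuity)).aestronglyMeasurable
  have h3 := h1.bdd_mul h2 (Eventually.of_forall fun u => le_of_eq (cexp_norm_one ω u))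
  simpa [mul_comm] using h3

lemma helper_int2 {g : ℝ → ℝ} (hg : Integrable g) (k : ℝ) :
    Integrable (fun z : ℝ => ((g z : ℝ) : ℂ) * Complex.exp (Complex.I*k*z)) := by
  have h2 : AEStronglyMeasurable (fun z : ℝ => Complex.exp (Complex.I*k*z)) volume := by
    exact (Complex.continuous_exp.comp (by continuity)).aestronglyMeasurable
  have h3 := hg.ofReal.bdd_mul h2 (Eventually.of_forall fun z => le_of_eq (cexp_norm_one' k z))
  simpa [mul_comm] using h3

lemma helper_int3 {g : ℝ → ℝ} (hg : Integrable g) {h : ℝ → ℝ} (hc : Continuous h)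
    (hb : ∀ x, |h x| ≤ 1) : Integrable (fun z : ℝ => g z * h z) := by
  have h3 := hg.bdd_mul (c := 1) hc.aestronglyMeasurable (Eventually.of_forall fun z => by simpa using hb z)
  simpa [mul_comm] using h3

lemma cexp_hasDeriv (ω x : ℝ) :
    HasDerivAt (fun u : ℝ => Complex.exp (2*Complex.I*ω*u))
      ((2*Complex.I*ω) * Complex.exp (2*Complex.I*ω*x)) x := by
  have h0 : HasDerivAt (fun u : ℝ => ((u:ℂ))) 1 x := Complex.ofRealCLM.hasDerivAt
  have h1 : HasDerivAt (fun u : ℝ => (2*Complex.I*ω) * (u:ℂ)) (2*Complex.I*ω) x := by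
    simpa using h0.const_mul (2*Complex.I*ω)
  have := h1.cexp
  simpa [mul_comm] using this

lemma halfline (f : ℝ → ℝ) (hf1 : ContDiff ℝ 1 f)
    (hif : Integrable f) (hif' : Integrable (deriv f))
    (hlimf : Tendsto f atTop (nhds 0)) {a : ℝ} (ha : 0 < a) (ω : ℝ) :
    (a:ℂ) * (∫ u in Ioi (0:ℝ), ((deriv f (a*u) : ℝ):ℂ) * Complex.exp (2*Complex.I*ω*u))
      + (2*Complex.I*ω) * (∫ u in Ioi (0:ℝ), ((f (a*u) : ℝ):ℂ) * Complex.exp (2*Complex.I*ω*u))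
      = -(f 0 : ℂ) := by
  set e : ℝ → ℂ := fun u => Complex.exp (2*Complex.I*ω*u) with he
  set F : ℝ → ℂ := fun u => ((f (a*u) : ℝ):ℂ) * e u with hF
  set F' : ℝ → ℂ := fun u => (a:ℂ) * (((deriv f (a*u) : ℝ):ℂ) * e u)
      + (2*Complex.I*ω) * (((f (a*u) : ℝ):ℂ) * e u) with hF'
  have hderiv : ∀ x : ℝ, HasDerivAt F (F' x) x := by
    intro x
    have hinner : HasDerivAt (fun u : ℝ => a * u) a x := by
      simpa using (hasDerivAt_id x).const_mul a
    have hfc : HasDerivAt (fun u : ℝ => f (a*u)) (deriv f (a*x) * a) x :=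
      ((hf1.differentiable (by norm_num) (a*x)).hasDerivAt).comp x hinner
    have hfc' := hfc.ofReal_comp
    have : HasDerivAt (fun u : ℝ => ((f (a*u) : ℝ):ℂ) * Complex.exp (2*Complex.I*ω*u)) _ x :=
      hfc'.mul (cexp_hasDeriv ω x)
    convert this using 1
    simp only [hF', he]
    push_cast
    ring
  have hint' : Integrable F' :=
    ((helper_int hif' ha.ne' ω).const_mul _).add (((helper_int hif ha.ne' ω).const_mul _))
  have htend : Tendsto F atTop (nhds 0) := by
    have h1 : Tendsto (fun u : ℝ => a * u) atTop atTop :=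
      Tendsto.const_mul_atTop ha tendsto_id
    have h2 : Tendsto (fun u : ℝ => |f (a*u)|) atTop (nhds 0) := by
      simpa using (hlimf.comp h1).abs
    refine squeeze_zero_norm (fun u => ?_) h2
    simp only [hF, he, norm_mul]
    rw [cexp_norm_one]
    simp
  have key : ∫ x in Ioi (0:ℝ), F' x = 0 - F 0 :=
    integral_Ioi_of_hasDerivAt_of_tendsto' (fun x _ => hderiv x)
      hint'.integrableOn htend
  have hsplit : ∫ x in Ioi (0:ℝ), F' x
      = (a:ℂ) * (∫ u in Ioi (0:ℝ), ((deriv f (a*u) : ℝ):ℂ) * e u)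
      + (2*Complex.I*ω) * (∫ u in Ioi (0:ℝ), ((f (a*u) : ℝ):ℂ) * e u) := by
    rw [integral_add ((helper_int hif' ha.ne' ω).const_mul _).integrableOn
      ((helper_int hif ha.ne' ω).const_mul _).integrableOn,
      integral_const_mul, integral_const_mul]
  rw [hsplit] at key
  rw [key]
  simp [hF, he]


lemma final_algebra_core (c v w Mc Ms : ℂ) (hc : c ≠ 0) (hw : w ≠ 0) (hA : c + v ≠ 0) :
    (v^2 - c^2)/(4*w^2*c) * ((2*Complex.I*w - 4*w^2*((c+v)⁻¹*(Mc + Ms*Complex.I)))/(c+v)^2)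
    = Complex.I*((v-c)/(2*w*c*(c+v))) + ((c-v)/(2*c*(c+v)^2))*(2*Mc)
      + Complex.I*((c-v)/(c*(c+v)^2))*Ms := by
  obtain ⟨A, hAv⟩ : ∃ A : ℂ, A = c + v := ⟨_, rfl⟩
  have hv : v = A - c := by rw [hAv]; ring
  have hA' : A ≠ 0 := by rw [hAv]; exact hA
  rw [hv, show c + (A - c) = A from by ring]
  rw [← sub_eq_zero]
  field_simp [hc, hw, hA']
  ring_nf

lemma final_algebra (c v w a Mc Ms : ℝ) (hc : c ≠ 0) (hw : w ≠ 0) (hac : a = c + v)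
    (ha : a ≠ 0) :
    (((v^2 - c^2) / (4*w^2*c) : ℝ) : ℂ)
        * ((2*Complex.I*(w:ℂ) - 4*(w:ℂ)^2*((a:ℂ)⁻¹*((Mc:ℂ) + (Ms:ℂ)*Complex.I)))/(a:ℂ)^2)
    = Complex.I * (((v-c)/(2*w*c*a) : ℝ):ℂ) + (((c-v)/(2*c*a^2) : ℝ):ℂ) * (2*(Mc:ℂ))
      + Complex.I * (((c-v)/(c*a^2) : ℝ):ℂ) * (Ms:ℂ) := by
  subst hac
  have hc' : (c:ℂ) ≠ 0 := Complex.ofReal_ne_zero.2 hc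
  have hw' : (w:ℂ) ≠ 0 := Complex.ofReal_ne_zero.2 hw
  have hA' : (c:ℂ) + (v:ℂ) ≠ 0 := by
    have := Complex.ofReal_ne_zero.2 ha; push_cast at this; exact this
  have := final_algebra_core (c:ℂ) (v:ℂ) (w:ℂ) (Mc:ℂ) (Ms:ℂ) hc' hw' hA'
  push_cast
  convert this using 2

/-- Decomposition of the pulse-shaping exponent for a medium in uniform
translational motion. -/
theorem stmt15 (Φ : ℝ → ℝ) (hΦ : ContDiff ℝ 2 Φ) (heven : ∀ z : ℝ, Φ (-z) = Φ z)
    (h0 : Φ 0 = 1) (h0' : deriv Φ 0 = 0)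
    (hi : Integrable Φ) (hi' : Integrable (deriv Φ)) (hi'' : Integrable (deriv (deriv Φ)))
    (hlim : Tendsto Φ atTop (nhds 0)) (hlim' : Tendsto (deriv Φ) atTop (nhds 0))
    (c_o v : ℝ) (hc : 0 < c_o) (hv : |v| < c_o)
    (γ : ℝ → ℂ)
    (hγ : ∀ ω : ℝ, ω ≠ 0 → γ ω = (((v ^ 2 - c_o ^ 2) / (4 * ω ^ 2 * c_o) : ℝ) : ℂ) *
      ∫ u in Ioi (0:ℝ), ((deriv (deriv Φ) ((c_o + v) * u) : ℝ) : ℂ) *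
        Complex.exp (2 * Complex.I * ω * u))
    (Φhat : ℝ → ℂ)
    (hΦhat : ∀ k : ℝ, Φhat k = ∫ z : ℝ, (Φ z : ℂ) * Complex.exp (Complex.I * k * z)) :
    ∀ ω : ℝ, ω ≠ 0 →
      γ ω = Complex.I * (((v - c_o) / (2 * ω * c_o * (c_o + v)) : ℝ) : ℂ)
        + (((c_o - v) / (2 * c_o * (c_o + v) ^ 2) : ℝ) : ℂ) * Φhat (2 * ω / (c_o + v))
        + Complex.I * (((c_o - v) / (c_o * (c_o + v) ^ 2) : ℝ) : ℂ) *
            ((∫ z in Ioi (0:ℝ), Φ z * Real.sin (2 * ω * z / (c_o + v)) : ℝ) : ℂ) := by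
  intro ω hω
  obtain ⟨hv1, hv2⟩ := abs_lt.1 hv
  have ha : 0 < c_o + v := by linarith
  set a : ℝ := c_o + v with ha_def
  set k : ℝ := 2 * ω / a with hk_def
  have hΦ1 : ContDiff ℝ 1 Φ := hΦ.of_le (by norm_num)
  have hdΦ1 : ContDiff ℝ 1 (deriv Φ) := by
    have h2 : ContDiff ℝ (1+1 : ℕ) Φ := by norm_num; exact hΦ
    exact (contDiff_succ_iff_deriv.mp h2).2.2
  -- the three half-line integrals
  set I₂ : ℂ := ∫ u in Ioi (0:ℝ), ((deriv (deriv Φ) (a*u) : ℝ):ℂ) * Complex.exp (2*Complex.I*ω*u) with hI2_def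
  set I₁ : ℂ := ∫ u in Ioi (0:ℝ), ((deriv Φ (a*u) : ℝ):ℂ) * Complex.exp (2*Complex.I*ω*u) with hI1_def
  set I₀ : ℂ := ∫ u in Ioi (0:ℝ), ((Φ (a*u) : ℝ):ℂ) * Complex.exp (2*Complex.I*ω*u) with hI0_def
  have eq1 : (a:ℂ) * I₂ + (2*Complex.I*ω) * I₁ = 0 := by
    have := halfline (deriv Φ) hdΦ1 hi' hi'' hlim' ha ω
    rw [h0'] at this
    rw [hI2_def, hI1_def]
    simpa using this
  have eq2 : (a:ℂ) * I₁ + (2*Complex.I*ω) * I₀ = -1 := by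
    have := halfline Φ hΦ1 hi hi' hlim ha ω
    rw [h0] at this
    rw [hI1_def, hI0_def]
    simpa using this
  -- change of variables in I₀
  set g : ℝ → ℂ := fun z => (Φ z : ℂ) * Complex.exp (Complex.I * k * z) with hg_def
  set L : ℂ := ∫ z in Ioi (0:ℝ), g z with hL_def
  have hK : I₀ = (a : ℂ)⁻¹ * L := by
    have h1 : I₀ = ∫ u in Ioi (0:ℝ), g (a*u) := by
      rw [hI0_def]
      refine setIntegral_congr_fun measurableSet_Ioi (fun u _ => ?_)
      have ha' : (a:ℂ) ≠ 0 := by exact_mod_cast ha.ne'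
      simp only [hg_def, hk_def]
      congr 2
      push_cast
      field_simp
    rw [h1, integral_comp_mul_left_Ioi g 0 ha, mul_zero]
    simp [Complex.real_smul]
    exact Or.inl rfl
  -- split L into cos and sin parts
  have hcosInt : Integrable (fun z : ℝ => Φ z * Real.cos (k*z)) :=
    helper_int3 hi (Real.continuous_cos.comp (continuous_const.mul continuous_id))
      (fun x => Real.abs_cos_le_one _)
  have hsinInt : Integrable (fun z : ℝ => Φ z * Real.sin (k*z)) :=
    helper_int3 hi (Real.continuous_sin.comp (continuous_const.mul continuous_id))
      (fun x => Real.abs_sin_le_one _)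
  set Mc : ℝ := ∫ z in Ioi (0:ℝ), Φ z * Real.cos (k*z) with hMc_def
  set Ms : ℝ := ∫ z in Ioi (0:ℝ), Φ z * Real.sin (k*z) with hMs_def
  have hIc : IntegrableOn (fun z : ℝ => ((Φ z * Real.cos (k*z) : ℝ) : ℂ)) (Ioi 0) :=
    hcosInt.ofReal.integrableOn
  have hIs : IntegrableOn (fun z : ℝ => ((Φ z * Real.sin (k*z) : ℝ) : ℂ) * Complex.I) (Ioi 0) :=
    (hsinInt.ofReal.mul_const Complex.I).integrableOn
  have hL : L = (Mc:ℂ) + (Ms:ℂ) * Complex.I := by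
    rw [hL_def]
    have hpt : ∀ z ∈ Ioi (0:ℝ), g z
        = ((Φ z * Real.cos (k*z) : ℝ):ℂ) + ((Φ z * Real.sin (k*z) : ℝ):ℂ) * Complex.I := by
      intro z _
      simp only [hg_def]
      have h : (Complex.I * (k:ℂ) * (z:ℂ)) = ((k*z:ℝ):ℂ) * Complex.I := by push_cast; ring
      rw [h, Complex.exp_mul_I, ← Complex.ofReal_cos, ← Complex.ofReal_sin]
      push_cast; ring
    rw [setIntegral_congr_fun measurableSet_Ioi hpt, integral_add hIc hIs, integral_mul_const]
    congr 1
    · exact integral_ofReal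
    · congr 1
      exact integral_ofReal
  -- Fourier transform in terms of cosine integral
  have hhat : Φhat k = 2 * (Mc:ℂ) := by
    rw [hΦhat k]
    have hint : Integrable (fun z : ℝ => (Φ z:ℂ) * Complex.exp (Complex.I*(k:ℂ)*z)) :=
      helper_int2 hi k
    rw [← intervalIntegral.integral_Iic_add_Ioi hint.integrableOn hint.integrableOn]
    have hneg : (∫ z in Iic (0:ℝ), (Φ z:ℂ) * Complex.exp (Complex.I*(k:ℂ)*z))
        = ∫ z in Ioi (0:ℝ), (Φ (-z):ℂ) * Complex.exp (Complex.I*(k:ℂ)*(-z:ℝ)) := by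
      have h := integral_comp_neg_Ioi (0:ℝ)
        (fun z : ℝ => (Φ z:ℂ) * Complex.exp (Complex.I*(k:ℂ)*z))
      rw [neg_zero] at h
      exact h.symm
    rw [hneg, ← integral_add (hint.comp_neg.integrableOn) hint.integrableOn]
    have hpt : ∀ z ∈ Ioi (0:ℝ), ((Φ (-z):ℂ) * Complex.exp (Complex.I*(k:ℂ)*(-z:ℝ))
        + (Φ z:ℂ) * Complex.exp (Complex.I*(k:ℂ)*z))
        = 2 * ((Φ z * Real.cos (k*z) : ℝ):ℂ) := by
      intro z _
      have e1 : Complex.I * (k:ℂ) * ((-z:ℝ):ℂ) = ((-(k*z):ℝ):ℂ) * Complex.I := by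
        push_cast; ring
      have e2 : Complex.I * (k:ℂ) * (z:ℂ) = (((k*z):ℝ):ℂ) * Complex.I := by
        push_cast; ring
      rw [heven, e1, e2, Complex.exp_mul_I, Complex.exp_mul_I, ← Complex.ofReal_cos,
        ← Complex.ofReal_sin, ← Complex.ofReal_cos, ← Complex.ofReal_sin,
        Real.cos_neg, Real.sin_neg]
      push_cast; ring
    rw [setIntegral_congr_fun measurableSet_Ioi hpt, integral_const_mul]
    congr 1
    exact integral_ofReal
  -- solve the linear system
  have ha' : (a:ℂ) ≠ 0 := by exact_mod_cast ha.ne'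
  have hω' : (ω:ℂ) ≠ 0 := Complex.ofReal_ne_zero.2 hω
  have hI2 : I₂ = (2*Complex.I*(ω:ℂ) - 4*(ω:ℂ)^2 * I₀) / (a:ℂ)^2 := by
    field_simp
    linear_combination (a:ℂ) * eq1 - (2*Complex.I*(ω:ℂ)) * eq2
      + 4*(ω:ℂ)^2*I₀*Complex.I_sq
  -- final computation
  have hMs' : (∫ z in Ioi (0:ℝ), Φ z * Real.sin (2*ω*z/a)) = Ms := by
    rw [hMs_def]
    refine setIntegral_congr_fun measurableSet_Ioi (fun z _ => ?_)
    have h : 2*ω*z/a = k*z := by rw [hk_def]; ring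
    rw [h]
  rw [hγ ω hω, ← hI2_def, hMs', hhat, hI2, hK, hL]
  exact final_algebra c_o v ω a Mc Ms hc.ne' hω ha_def ha.ne'
end
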